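/- arXiv:2104.09129 — 10 statements merged into one kernel-verified Lean document; each statement's English description precedes it below -/
import Mathlib

section
/- For every nonnegative integer α, all real numbers x, y, and every natural number n, the Bell-based Euler polynomial of order α satisfies ₍B₎E_n^(α)(x;y) = Σ_{k=0}^{n} C(n,k) · E_k^(α)(x) · B_{n−k}(y), where C(n,k) is the binomial coefficient. -/
open PowerSeries Finset

/-- The series `e^{x t}`. -/
noncomputable def expXT (x : ℝ) : PowerSeries ℝ :=
  PowerSeries.rescale x (PowerSeries.exp ℝ)

/-- The series `e^{y (e^t - 1)} = ∑_{k ≥ 0} y^k (e^t - 1)^k / k!`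
(the inner sum is finite in each coefficient since `(e^t - 1)^k` has order `≥ k`). -/
noncomputable def bellSeries (y : ℝ) : PowerSeries ℝ :=
  PowerSeries.mk fun n =>
    ∑ k ∈ Finset.range (n + 1),
      y ^ k * ((k.factorial : ℝ))⁻¹ * PowerSeries.coeff n ((PowerSeries.exp ℝ - 1) ^ k)

/-- The series `(2 / (e^t + 1))^α`. -/
noncomputable def eulerSeries (α : ℕ) : PowerSeries ℝ :=
  (2 * (PowerSeries.exp ℝ + 1)⁻¹) ^ α

/-- The Bell-based Euler polynomial `₍B₎E_n^(α)(x; y)`: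
`n!` times the coefficient of `t^n` in `(2/(e^t+1))^α e^{xt + y(e^t-1)}`. -/
noncomputable def bellEuler (α : ℕ) (x y : ℝ) (n : ℕ) : ℝ :=
  n.factorial * PowerSeries.coeff n (eulerSeries α * expXT x * bellSeries y)

/-- The Euler polynomial of order α: `E_n^(α)(x)` with
`∑ E_n^(α)(x) t^n/n! = (2/(e^t+1))^α e^{xt}`. -/
noncomputable def eulerPoly (α : ℕ) (x : ℝ) (n : ℕ) : ℝ :=
  n.factorial * PowerSeries.coeff n (eulerSeries α * expXT x)

/-- The Bell polynomial `B_n(y)` with `∑ B_n(y) t^n/n! = e^{y(e^t-1)}`. -/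
noncomputable def bellPoly (y : ℝ) (n : ℕ) : ℝ :=
  n.factorial * PowerSeries.coeff n (bellSeries y)

theorem stmt0 (α : ℕ) (x y : ℝ) (n : ℕ) :
    bellEuler α x y n =
      ∑ k ∈ Finset.range (n + 1),
        (n.choose k : ℝ) * eulerPoly α x k * bellPoly y (n - k) := by
  simp only [bellEuler, eulerPoly, bellPoly]
  rw [PowerSeries.coeff_mul, Finset.Nat.sum_antidiagonal_eq_sum_range_succ_mk,
    Finset.mul_sum]
  refine Finset.sum_congr rfl fun k hk => ?_
  have hk' : k ≤ n := Nat.lt_succ_iff.mp (Finset.mem_range.mp hk)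
  have h : (n.choose k : ℝ) * k.factorial * (n - k).factorial = n.factorial := by
    exact_mod_cast congrArg (Nat.cast (R := ℝ)) (Nat.choose_mul_factorial_mul_factorial hk')
  rw [← h]; ring
end

section
/- For all nonnegative integers α₁, α₂, all real numbers x₁, x₂, y₁, y₂, and every natural number n, the addition formula ₍B₎E_n^(α₁+α₂)(x₁+x₂; y₁+y₂) = Σ_{k=0}^{n} C(n,k) · ₍B₎E_k^(α₁)(x₁;y₁) · ₍B₎E_{n−k}^(α₂)(x₂;y₂) holds. -/
open PowerSeries Finset

lemma coeff_em1_pow_eq_zero {n k : ℕ} (h : n < k) :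
    PowerSeries.coeff n ((PowerSeries.exp ℝ - 1) ^ k) = 0 := by
  have hdvd : (PowerSeries.X : PowerSeries ℝ) ∣ (PowerSeries.exp ℝ - 1) := by
    rw [PowerSeries.X_dvd_iff]
    simp [PowerSeries.constantCoeff_exp]
  have : (PowerSeries.X : PowerSeries ℝ) ^ k ∣ (PowerSeries.exp ℝ - 1) ^ k :=
    pow_dvd_pow_of_dvd hdvd k
  exact (PowerSeries.X_pow_dvd_iff.mp this) n h


lemma tri_rect (n : ℕ) (g : ℕ → ℕ → ℝ) (hg : ∀ a b, n < a + b → g a b = 0) :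
    ∑ a ∈ Finset.range (n+1), ∑ b ∈ Finset.range (n+1), g a b
      = ∑ k ∈ Finset.range (n+1), ∑ a ∈ Finset.range (k+1), g a (k - a) := by
  have hz : ∑ p ∈ (Finset.range (n+1) ×ˢ Finset.range (n+1)).filter
      (fun p => ¬ p.1 + p.2 ≤ n), g p.1 p.2 = 0 := by
    apply Finset.sum_eq_zero
    intro p hp
    exact hg p.1 p.2 (by have := (Finset.mem_filter.mp hp).2; omega)
  have h1 : ∑ a ∈ Finset.range (n+1), ∑ b ∈ Finset.range (n+1), g a b
      = ∑ p ∈ (Finset.range (n+1) ×ˢ Finset.range (n+1)).filter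
          (fun p => p.1 + p.2 ≤ n), g p.1 p.2 := by
    rw [← Finset.sum_product', ← Finset.sum_filter_add_sum_filter_not
      (Finset.range (n+1) ×ˢ Finset.range (n+1)) (fun p => p.1 + p.2 ≤ n)
      (fun p => g p.1 p.2), hz, add_zero]
  rw [h1, Finset.sum_sigma']
  apply Finset.sum_nbij' (i := fun p => (⟨p.1 + p.2, p.1⟩ : Σ _ : ℕ, ℕ))
    (j := fun x => (x.2, x.1 - x.2))
  · intro p hp
    simp only [Finset.mem_filter, Finset.mem_product, Finset.mem_range] at hp
    simp only [Finset.mem_sigma, Finset.mem_range]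
    omega
  · intro x hx
    simp only [Finset.mem_sigma, Finset.mem_range] at hx
    simp only [Finset.mem_filter, Finset.mem_product, Finset.mem_range]
    omega
  · intro p hp
    simp only []
    ext <;> simp <;> omega
  · intro x hx
    simp only [Finset.mem_sigma, Finset.mem_range] at hx
    ext <;> simp <;> omega
  · intro p hp; simp

lemma bell_mul (y₁ y₂ : ℝ) :
    bellSeries y₁ * bellSeries y₂ = bellSeries (y₁ + y₂) := by
  ext n
  rw [PowerSeries.coeff_mul]
  have hfac : ∀ p ∈ Finset.HasAntidiagonal.antidiagonal n,
      (PowerSeries.coeff p.1 (bellSeries y₁)) * (PowerSeries.coeff p.2 (bellSeries y₂))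
        = ∑ a ∈ Finset.range (n+1), ∑ b ∈ Finset.range (n+1),
            (y₁ ^ a * ((a.factorial : ℝ))⁻¹ * PowerSeries.coeff p.1 ((PowerSeries.exp ℝ - 1) ^ a))
            * (y₂ ^ b * ((b.factorial : ℝ))⁻¹ * PowerSeries.coeff p.2 ((PowerSeries.exp ℝ - 1) ^ b)) := by
    intro p hp
    rw [Finset.HasAntidiagonal.mem_antidiagonal] at hp
    have h1 : PowerSeries.coeff p.1 (bellSeries y₁)
        = ∑ a ∈ Finset.range (n+1),
            y₁ ^ a * ((a.factorial : ℝ))⁻¹ * PowerSeries.coeff p.1 ((PowerSeries.exp ℝ - 1) ^ a) := by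
      rw [bellSeries, PowerSeries.coeff_mk]
      apply Finset.sum_subset
      · intro a ha; rw [Finset.mem_range] at *; omega
      · intro a _ ha
        rw [Finset.mem_range] at ha
        rw [coeff_em1_pow_eq_zero (by omega), mul_zero]
    have h2 : PowerSeries.coeff p.2 (bellSeries y₂)
        = ∑ b ∈ Finset.range (n+1),
            y₂ ^ b * ((b.factorial : ℝ))⁻¹ * PowerSeries.coeff p.2 ((PowerSeries.exp ℝ - 1) ^ b) := by
      rw [bellSeries, PowerSeries.coeff_mk]
      apply Finset.sum_subset
      · intro b hb; rw [Finset.mem_range] at *; omega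
      · intro b _ hb
        rw [Finset.mem_range] at hb
        rw [coeff_em1_pow_eq_zero (by omega), mul_zero]
    rw [h1, h2, Finset.sum_mul_sum]
  rw [Finset.sum_congr rfl hfac]
  rw [Finset.sum_comm]
  have hswap : ∀ a, ∑ p ∈ Finset.HasAntidiagonal.antidiagonal n, ∑ b ∈ Finset.range (n+1),
      (y₁ ^ a * ((a.factorial : ℝ))⁻¹ * PowerSeries.coeff p.1 ((PowerSeries.exp ℝ - 1) ^ a))
      * (y₂ ^ b * ((b.factorial : ℝ))⁻¹ * PowerSeries.coeff p.2 ((PowerSeries.exp ℝ - 1) ^ b))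
      = ∑ b ∈ Finset.range (n+1),
          y₁ ^ a * y₂ ^ b * (((a.factorial : ℝ))⁻¹ * ((b.factorial : ℝ))⁻¹)
            * PowerSeries.coeff n ((PowerSeries.exp ℝ - 1) ^ (a + b)) := by
    intro a
    rw [Finset.sum_comm]
    refine Finset.sum_congr rfl fun b _ => ?_
    rw [pow_add, PowerSeries.coeff_mul, Finset.mul_sum]
    refine Finset.sum_congr rfl fun p _ => ?_
    ring
  rw [Finset.sum_congr rfl fun a _ => hswap a]
  -- Now RHS side
  rw [bellSeries, PowerSeries.coeff_mk]
  rw [show (∑ k ∈ Finset.range (n + 1),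
      (y₁ + y₂) ^ k * ((k.factorial : ℝ))⁻¹ * PowerSeries.coeff n ((PowerSeries.exp ℝ - 1) ^ k))
    = ∑ k ∈ Finset.range (n+1), ∑ a ∈ Finset.range (k+1),
        y₁ ^ a * y₂ ^ (k - a) * (((a.factorial : ℝ))⁻¹ * (((k - a).factorial : ℝ))⁻¹)
          * PowerSeries.coeff n ((PowerSeries.exp ℝ - 1) ^ (a + (k - a))) from ?_]
  · exact tri_rect n _ (fun a b h => by rw [coeff_em1_pow_eq_zero h]; ring)
  · refine Finset.sum_congr rfl fun k hk => ?_
    rw [add_pow, Finset.sum_mul, Finset.sum_mul]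
    refine Finset.sum_congr rfl fun a ha => ?_
    rw [Finset.mem_range] at ha
    have hak : a ≤ k := by omega
    have : a + (k - a) = k := by omega
    rw [this]
    have hne : ((k.factorial : ℝ)) ≠ 0 := Nat.cast_ne_zero.mpr k.factorial_ne_zero
    have hne1 : ((a.factorial : ℝ)) ≠ 0 := Nat.cast_ne_zero.mpr a.factorial_ne_zero
    have hne2 : (((k-a).factorial : ℝ)) ≠ 0 := Nat.cast_ne_zero.mpr (k-a).factorial_ne_zero
    have hch : ((k.choose a : ℝ)) * a.factorial * (k-a).factorial = k.factorial := by
      rw_mod_cast [Nat.choose_mul_factorial_mul_factorial hak]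
    field_simp
    rw [← hch]; ring

theorem stmt3 (α₁ α₂ : ℕ) (x₁ x₂ y₁ y₂ : ℝ) (n : ℕ) :
    bellEuler (α₁ + α₂) (x₁ + x₂) (y₁ + y₂) n =
      ∑ k ∈ Finset.range (n + 1),
        (n.choose k : ℝ) * bellEuler α₁ x₁ y₁ k * bellEuler α₂ x₂ y₂ (n - k) := by
  have hP : eulerSeries (α₁ + α₂) * expXT (x₁ + x₂) * bellSeries (y₁ + y₂)
      = (eulerSeries α₁ * expXT x₁ * bellSeries y₁)
        * (eulerSeries α₂ * expXT x₂ * bellSeries y₂) := by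
    rw [eulerSeries, pow_add, ← bell_mul, expXT, ← PowerSeries.exp_mul_exp_eq_exp_add]
    show _ = eulerSeries α₁ * expXT x₁ * bellSeries y₁
        * (eulerSeries α₂ * expXT x₂ * bellSeries y₂)
    rw [eulerSeries, eulerSeries, expXT, expXT]
    ring
  unfold bellEuler
  rw [hP, PowerSeries.coeff_mul, Finset.Nat.sum_antidiagonal_eq_sum_range_succ_mk,
    Finset.mul_sum]
  refine Finset.sum_congr rfl fun k hk => ?_
  have hkn : k ≤ n := by rw [Finset.mem_range] at hk; omega
  have hch : ((n.choose k : ℝ)) * k.factorial * (n - k).factorial = n.factorial := by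
    rw_mod_cast [Nat.choose_mul_factorial_mul_factorial hkn]
  rw [← hch]
  ring
end

section
/- For every nonnegative integer α, all real numbers x, y, and every natural number n, ₍B₎E_n^(α)(x+1;y) = Σ_{k=0}^{n} C(n,k) · ₍B₎E_k^(α)(x;y). -/
open PowerSeries Finset

lemma expXT_add_one (x : ℝ) : expXT (x + 1) = expXT x * PowerSeries.exp ℝ := by
  rw [expXT, expXT, ← PowerSeries.exp_mul_exp_eq_exp_add x 1, rescale_one, RingHom.id_apply]

theorem stmt4 (α : ℕ) (x y : ℝ) (n : ℕ) :
    bellEuler α (x + 1) y n =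
      ∑ k ∈ Finset.range (n + 1), (n.choose k : ℝ) * bellEuler α x y k := by
  unfold bellEuler
  rw [expXT_add_one]
  have : eulerSeries α * (expXT x * PowerSeries.exp ℝ) * bellSeries y
      = (eulerSeries α * expXT x * bellSeries y) * PowerSeries.exp ℝ := by ring
  rw [this, PowerSeries.coeff_mul,
    Finset.Nat.sum_antidiagonal_eq_sum_range_succ_mk, Finset.mul_sum]
  refine Finset.sum_congr rfl fun k hk => ?_
  have hk' : k ≤ n := Nat.lt_succ_iff.mp (Finset.mem_range.mp hk)
  rw [PowerSeries.coeff_exp]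
  have hfac : (n.factorial : ℝ) = (n.choose k : ℝ) * k.factorial * (n - k).factorial := by
    rw [← Nat.cast_mul, ← Nat.cast_mul, Nat.choose_mul_factorial_mul_factorial hk']
  push_cast
  rw [hfac]
  field_simp
end

section
/- For every nonnegative integer α, all real numbers x, y, and every natural number n, ₍B₎E_{n+1}^(α)(x+1;y) − ₍B₎E_{n+1}^(α)(x;y) = Σ_{k=0}^{n} C(n+1,k) · ₍B₎E_k^(α)(x;y). -/
open PowerSeries Finset

theorem stmt5 (α : ℕ) (x y : ℝ) (n : ℕ) :
    bellEuler α (x + 1) y (n + 1) - bellEuler α x y (n + 1) =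
      ∑ k ∈ Finset.range (n + 1), ((n + 1).choose k : ℝ) * bellEuler α x y k := by
  have hexp : expXT (x + 1) = expXT x * PowerSeries.exp ℝ := by
    rw [expXT, expXT, ← PowerSeries.exp_mul_exp_eq_exp_add x 1, PowerSeries.rescale_one]
    rfl
  set G := eulerSeries α * expXT x * bellSeries y with hG
  have h1 : eulerSeries α * expXT (x + 1) * bellSeries y = G * PowerSeries.exp ℝ := by
    rw [hexp, hG]; ring
  unfold bellEuler
  rw [h1, ← hG, ← mul_sub]
  have h2 : (PowerSeries.coeff (n + 1)) (G * PowerSeries.exp ℝ)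
      - PowerSeries.coeff (n + 1) G
      = PowerSeries.coeff (n + 1) (G * (PowerSeries.exp ℝ - 1)) := by
    rw [mul_sub, mul_one, map_sub]
  rw [h2, PowerSeries.coeff_mul, Finset.Nat.sum_antidiagonal_eq_sum_range_succ_mk,
    Finset.sum_range_succ]
  have hlast : (PowerSeries.coeff ((n + 1) - (n + 1))) (PowerSeries.exp ℝ - 1) = 0 := by
    simp
  rw [hlast, mul_zero, add_zero, Finset.mul_sum]
  apply Finset.sum_congr rfl
  intro k hk
  have hk' : k ≤ n := Nat.lt_succ_iff.mp (Finset.mem_range.mp hk)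
  have hsub : n + 1 - k ≠ 0 := by omega
  have hcoeff : (PowerSeries.coeff (n + 1 - k)) (PowerSeries.exp ℝ - 1)
      = ((n + 1 - k).factorial : ℝ)⁻¹ := by
    rw [map_sub, PowerSeries.coeff_exp, PowerSeries.coeff_one, if_neg hsub]
    push_cast
    simp [one_div]
  rw [hcoeff]
  have hfact : ((n + 1).choose k : ℝ) * k.factorial * (n + 1 - k).factorial
      = (n + 1).factorial := by
    exact_mod_cast congrArg (Nat.cast : ℕ → ℝ)
      (Nat.choose_mul_factorial_mul_factorial (by omega : k ≤ n + 1))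
  have hne : ((n + 1 - k).factorial : ℝ) ≠ 0 := Nat.cast_ne_zero.mpr (Nat.factorial_ne_zero _)
  field_simp
  linear_combination (-(PowerSeries.coeff k G)) * hfact
end

section
/- For all real numbers x, y and every natural number n, the bivariate Bell polynomial satisfies B_n(x;y) = ( ₍B₎E_n(x+1;y) + ₍B₎E_n(x;y) ) / 2, where ₍B₎E_n(x;y) denotes the Bell-based Euler polynomial of order 1. -/
open PowerSeries Finset

/-- The bivariate Bell polynomial `B_n(x;y)` with
`∑ B_n(x;y) t^n/n! = e^{xt + y(e^t-1)}`. -/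
noncomputable def bellPoly2 (x y : ℝ) (n : ℕ) : ℝ :=
  n.factorial * PowerSeries.coeff n (expXT x * bellSeries y)

lemma key (x : ℝ) :
    eulerSeries 1 * expXT (x + 1) + eulerSeries 1 * expXT x = 2 * expXT x := by
  have h1 : expXT (x + 1) = expXT x * PowerSeries.exp ℝ := by
    rw [expXT, expXT, ← PowerSeries.exp_mul_exp_eq_exp_add x 1, PowerSeries.rescale_one]
    rfl
  have hinv : (PowerSeries.exp ℝ + 1) * (PowerSeries.exp ℝ + 1)⁻¹ = 1 := by
    apply PowerSeries.mul_inv_cancel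
    simp [PowerSeries.constantCoeff_exp]
  rw [h1, eulerSeries, pow_one]
  have h2 : 2 * (PowerSeries.exp ℝ + 1)⁻¹ * (expXT x * PowerSeries.exp ℝ)
      + 2 * (PowerSeries.exp ℝ + 1)⁻¹ * expXT x
      = 2 * ((PowerSeries.exp ℝ + 1) * (PowerSeries.exp ℝ + 1)⁻¹) * expXT x := by ring
  rw [h2, hinv]; ring

theorem stmt6 (x y : ℝ) (n : ℕ) :
    bellPoly2 x y n = (bellEuler 1 (x + 1) y n + bellEuler 1 x y n) / 2 := by
  have h : bellEuler 1 (x + 1) y n + bellEuler 1 x y n = 2 * bellPoly2 x y n := by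
    unfold bellEuler bellPoly2
    rw [← mul_add, ← map_add, ← add_mul, key, mul_assoc,
      show (2 : PowerSeries ℝ) = PowerSeries.C 2 by rw [map_ofNat],
      PowerSeries.coeff_C_mul]
    ring
  rw [h]; ring
end

section
/- For every nonnegative integer α and every natural number n ≥ 1, the partial derivative with respect to x of the Bell-based Euler polynomial of order α satisfies ∂/∂x ₍B₎E_n^(α)(x;y) = n · ₍B₎E_{n−1}^(α)(x;y), where ₍B₎E_n^(α)(x;y) is regarded as a polynomial function of the real variables x and y. -/
open PowerSeries Finset

lemma bellEuler_eq (α : ℕ) (x y : ℝ) (n : ℕ) :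
    bellEuler α x y n = ∑ k ∈ Finset.range (n + 1),
      (n.factorial : ℝ) * PowerSeries.coeff (n - k) (eulerSeries α * bellSeries y)
        * ((k.factorial : ℝ))⁻¹ * x ^ k := by
  unfold bellEuler
  have h : eulerSeries α * expXT x * bellSeries y
      = expXT x * (eulerSeries α * bellSeries y) := by ring
  rw [h, PowerSeries.coeff_mul, Finset.Nat.sum_antidiagonal_eq_sum_range_succ_mk,
    Finset.mul_sum]
  refine Finset.sum_congr rfl fun k hk => ?_
  rw [expXT, PowerSeries.coeff_rescale, PowerSeries.coeff_exp]
  have : (algebraMap ℚ ℝ) (1 / k.factorial) = ((k.factorial : ℝ))⁻¹ := by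
    simp
  rw [this]
  ring

theorem stmt8 (α : ℕ) (n : ℕ) (hn : 1 ≤ n) (x y : ℝ) :
    deriv (fun x' => bellEuler α x' y n) x = n * bellEuler α x y (n - 1) := by
  set g : ℕ → ℝ := fun m => PowerSeries.coeff m (eulerSeries α * bellSeries y) with hg
  set c : ℕ → ℝ := fun k => (n.factorial : ℝ) * g (n - k) * ((k.factorial : ℝ))⁻¹ with hc
  have key : (fun x' => bellEuler α x' y n)
      = fun x' => ∑ k ∈ Finset.range (n + 1), c k * x' ^ k := by
    funext x'
    rw [bellEuler_eq]
  have hd : HasDerivAt (fun x' => ∑ k ∈ Finset.range (n + 1), c k * x' ^ k)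
      (∑ k ∈ Finset.range (n + 1), c k * (k * x ^ (k - 1))) x :=
    HasDerivAt.fun_sum fun k _ => (hasDerivAt_pow k x).const_mul (c k)
  rw [key, hd.deriv, bellEuler_eq]
  have hsucc : n - 1 + 1 = n := Nat.succ_pred_eq_of_pos hn
  rw [Finset.sum_range_succ', hsucc, Finset.mul_sum]
  simp only [Nat.factorial_zero, pow_zero, Nat.cast_zero, zero_mul, mul_zero, add_zero]
  refine Finset.sum_congr rfl fun j hj => ?_
  have h1 : n - (j + 1) = n - 1 - j := by omega
  have h2 : (n.factorial : ℝ) = n * (n - 1).factorial := by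
    rw [← Nat.mul_factorial_pred (by omega : n ≠ 0)]; push_cast; ring
  simp only [hc, h1, Nat.factorial_succ]
  push_cast
  rw [h2]
  have hj1 : (j : ℝ) + 1 ≠ 0 := by positivity
  have hjf : (j.factorial : ℝ) ≠ 0 := by positivity
  field_simp
  ring
end

section
/- For every integer α ≥ 1 and every natural number n, the partial derivative with respect to y of the Bell-based Euler polynomial of order α satisfies ∂/∂y ₍B₎E_n^(α)(x;y) = −2 · ( ₍B₎E_n^(α)(x;y) − ₍B₎E_n^(α−1)(x;y) ), where ₍B₎E_n^(α)(x;y) is regarded as a polynomial function of the real variables x and y. -/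
open PowerSeries Finset

lemma coeff_expm1_pow_zero {m k : ℕ} (h : m < k) :
    PowerSeries.coeff m ((PowerSeries.exp ℝ - 1) ^ k) = 0 := by
  have hdvd : (PowerSeries.X : PowerSeries ℝ) ^ k ∣ (PowerSeries.exp ℝ - 1) ^ k :=
    pow_dvd_pow_of_dvd (PowerSeries.X_dvd_iff.mpr (by simp)) k
  exact PowerSeries.X_pow_dvd_iff.mp hdvd m h

lemma coeff_bellSeries (y : ℝ) (m N : ℕ) (hN : m ≤ N) :
    PowerSeries.coeff m (bellSeries y) =
      ∑ k ∈ Finset.range (N + 1),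
        y ^ k * ((k.factorial : ℝ))⁻¹ * PowerSeries.coeff m ((PowerSeries.exp ℝ - 1) ^ k) := by
  rw [bellSeries, PowerSeries.coeff_mk]
  refine Finset.sum_subset (by intro a ha; simp_all; omega) ?_
  intro k _ hk
  simp only [Finset.mem_range, not_lt] at hk
  rw [coeff_expm1_pow_zero (by omega), mul_zero]

/-- derivative of the `m`-th coefficient of `bellSeries`. -/
lemma hasDerivAt_coeff_bellSeries (y : ℝ) (m : ℕ) :
    HasDerivAt (fun y' => PowerSeries.coeff m (bellSeries y'))
      (PowerSeries.coeff m ((PowerSeries.exp ℝ - 1) * bellSeries y)) y := by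
  have h1 : (fun y' => PowerSeries.coeff m (bellSeries y')) =
      fun y' => ∑ k ∈ Finset.range (m + 1),
        y' ^ k * ((k.factorial : ℝ))⁻¹ * PowerSeries.coeff m ((PowerSeries.exp ℝ - 1) ^ k) := by
    funext y'; rw [bellSeries, PowerSeries.coeff_mk]
  rw [h1]
  have h2 : HasDerivAt (fun y' => ∑ k ∈ Finset.range (m + 1),
        y' ^ k * ((k.factorial : ℝ))⁻¹ * PowerSeries.coeff m ((PowerSeries.exp ℝ - 1) ^ k))
      (∑ k ∈ Finset.range (m + 1),
        (k : ℝ) * y ^ (k - 1) * ((k.factorial : ℝ))⁻¹ *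
          PowerSeries.coeff m ((PowerSeries.exp ℝ - 1) ^ k)) y := by
    apply HasDerivAt.fun_sum
    intro k _
    exact ((hasDerivAt_pow k y).mul_const _).mul_const _
  convert h2 using 1
  -- show the coefficient identity
  rw [PowerSeries.coeff_mul]
  have h3 : ∀ p ∈ Finset.HasAntidiagonal.antidiagonal m,
      PowerSeries.coeff p.1 (PowerSeries.exp ℝ - 1) * PowerSeries.coeff p.2 (bellSeries y) =
      ∑ k ∈ Finset.range (m + 1),
        y ^ k * ((k.factorial : ℝ))⁻¹ *
          (PowerSeries.coeff p.1 (PowerSeries.exp ℝ - 1) *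
            PowerSeries.coeff p.2 ((PowerSeries.exp ℝ - 1) ^ k)) := by
    intro p hp
    rw [coeff_bellSeries y p.2 m (by simp at hp; omega), Finset.mul_sum]
    exact Finset.sum_congr rfl fun k _ => by ring
  rw [Finset.sum_congr rfl h3, Finset.sum_comm]
  have h4 : ∀ k ∈ Finset.range (m + 1),
      (∑ p ∈ Finset.HasAntidiagonal.antidiagonal m,
        y ^ k * ((k.factorial : ℝ))⁻¹ *
          (PowerSeries.coeff p.1 (PowerSeries.exp ℝ - 1) *
            PowerSeries.coeff p.2 ((PowerSeries.exp ℝ - 1) ^ k))) =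
      y ^ k * ((k.factorial : ℝ))⁻¹ *
        PowerSeries.coeff m ((PowerSeries.exp ℝ - 1) ^ (k + 1)) := by
    intro k _
    rw [← Finset.mul_sum, pow_succ, mul_comm ((PowerSeries.exp ℝ - 1) ^ k),
      PowerSeries.coeff_mul]
  rw [Finset.sum_congr rfl h4]
  -- now both sides are sums; reindex LHS
  rw [Finset.sum_range_succ (fun k => y ^ k * ((k.factorial : ℝ))⁻¹ *
        PowerSeries.coeff m ((PowerSeries.exp ℝ - 1) ^ (k + 1)))]
  rw [Finset.sum_range_succ' (fun k => (k : ℝ) * y ^ (k - 1) * ((k.factorial : ℝ))⁻¹ *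
        PowerSeries.coeff m ((PowerSeries.exp ℝ - 1) ^ k))]
  rw [coeff_expm1_pow_zero (Nat.lt_succ_self m)]
  simp only [Nat.cast_zero, zero_mul, mul_zero, add_zero, zero_add]
  refine Finset.sum_congr rfl fun k _ => ?_
  have hfac : ((k + 1).factorial : ℝ) = (k + 1) * k.factorial := by
    push_cast [Nat.factorial_succ]; ring
  have h0 : (k.factorial : ℝ) ≠ 0 := Nat.cast_ne_zero.mpr k.factorial_ne_zero
  have h1 : ((k : ℝ) + 1) ≠ 0 := by positivity
  push_cast [hfac]
  field_simp

lemma hasDerivAt_coeff_mul_bellSeries (A : PowerSeries ℝ) (y : ℝ) (n : ℕ) :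
    HasDerivAt (fun y' => PowerSeries.coeff n (A * bellSeries y'))
      (PowerSeries.coeff n (A * (PowerSeries.exp ℝ - 1) * bellSeries y)) y := by
  have h1 : (fun y' => PowerSeries.coeff n (A * bellSeries y')) =
      fun y' => ∑ p ∈ Finset.HasAntidiagonal.antidiagonal n,
        PowerSeries.coeff p.1 A * PowerSeries.coeff p.2 (bellSeries y') := by
    funext y'; rw [PowerSeries.coeff_mul]
  rw [h1]
  have h2 : HasDerivAt (fun y' => ∑ p ∈ Finset.HasAntidiagonal.antidiagonal n,
        PowerSeries.coeff p.1 A * PowerSeries.coeff p.2 (bellSeries y'))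
      (∑ p ∈ Finset.HasAntidiagonal.antidiagonal n,
        PowerSeries.coeff p.1 A *
          PowerSeries.coeff p.2 ((PowerSeries.exp ℝ - 1) * bellSeries y)) y := by
    apply HasDerivAt.fun_sum
    intro p _
    exact (hasDerivAt_coeff_bellSeries y p.2).const_mul _
  convert h2 using 1
  rw [mul_assoc, PowerSeries.coeff_mul]

lemma euler_key (α : ℕ) (hα : 1 ≤ α) :
    eulerSeries α * (PowerSeries.exp ℝ - 1) =
      (-2 : ℝ) • (eulerSeries α - eulerSeries (α - 1)) := by
  obtain ⟨β, rfl⟩ := Nat.exists_eq_add_of_le hα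
  have hc : PowerSeries.constantCoeff (PowerSeries.exp ℝ + 1) ≠ 0 := by
    simp
  have hinv : (PowerSeries.exp ℝ + 1) * (PowerSeries.exp ℝ + 1)⁻¹ = 1 :=
    PowerSeries.mul_inv_cancel _ hc
  have h1 : (1 + β) - 1 = β := by omega
  rw [h1, eulerSeries, eulerSeries, add_comm 1 β, pow_succ]
  have key : (2 * (PowerSeries.exp ℝ + 1)⁻¹) * (PowerSeries.exp ℝ - 1) =
      (-2 : ℝ) • (2 * (PowerSeries.exp ℝ + 1)⁻¹ - 1) := by
    have h2 : (2 * (PowerSeries.exp ℝ + 1)⁻¹) * (PowerSeries.exp ℝ - 1) =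
        2 * ((PowerSeries.exp ℝ + 1) * (PowerSeries.exp ℝ + 1)⁻¹) -
          4 * (PowerSeries.exp ℝ + 1)⁻¹ := by ring
    rw [h2, hinv, PowerSeries.smul_eq_C_mul]
    have hC : (PowerSeries.C (-2 : ℝ)) = -2 := by
      simp [map_neg, map_ofNat]
    rw [hC]
    ring
  calc (2 * (PowerSeries.exp ℝ + 1)⁻¹) ^ β * (2 * (PowerSeries.exp ℝ + 1)⁻¹) *
        (PowerSeries.exp ℝ - 1)
      = (2 * (PowerSeries.exp ℝ + 1)⁻¹) ^ β *
          ((2 * (PowerSeries.exp ℝ + 1)⁻¹) * (PowerSeries.exp ℝ - 1)) := by ring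
    _ = (2 * (PowerSeries.exp ℝ + 1)⁻¹) ^ β *
          ((-2 : ℝ) • (2 * (PowerSeries.exp ℝ + 1)⁻¹ - 1)) := by rw [key]
    _ = (-2 : ℝ) • ((2 * (PowerSeries.exp ℝ + 1)⁻¹) ^ β * (2 * (PowerSeries.exp ℝ + 1)⁻¹) -
          (2 * (PowerSeries.exp ℝ + 1)⁻¹) ^ β) := by
        rw [mul_smul_comm]; congr 1; ring
    _ = (-2 : ℝ) • ((2 * (PowerSeries.exp ℝ + 1)⁻¹) ^ (β + 1) -
          (2 * (PowerSeries.exp ℝ + 1)⁻¹) ^ β) := by rw [pow_succ]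

theorem stmt9 (α : ℕ) (hα : 1 ≤ α) (n : ℕ) (x y : ℝ) :
    deriv (fun y' => bellEuler α x y' n) y =
      -2 * (bellEuler α x y n - bellEuler (α - 1) x y n) := by
  have hd : HasDerivAt (fun y' => bellEuler α x y' n)
      ((n.factorial : ℝ) * PowerSeries.coeff n
        (eulerSeries α * expXT x * (PowerSeries.exp ℝ - 1) * bellSeries y)) y := by
    unfold bellEuler
    exact (hasDerivAt_coeff_mul_bellSeries (eulerSeries α * expXT x) y n).const_mul _
  rw [hd.deriv]
  have h1 : eulerSeries α * expXT x * (PowerSeries.exp ℝ - 1) =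
      ((-2 : ℝ) • (eulerSeries α - eulerSeries (α - 1))) * expXT x := by
    rw [← euler_key α hα]; ring
  rw [h1]
  unfold bellEuler
  rw [smul_mul_assoc, smul_mul_assoc, map_smul, sub_mul, sub_mul, map_sub]
  simp only [smul_eq_mul]
  ring
end

section
/- For every natural number n and all real numbers x, y, z: ∫_x^{x+z} ₍B₎E_n(v;y) dv = Σ_{j=0}^{n} ( z^{j+1} / (j+1)! ) · ( n! / (n−j)! ) · ₍B₎E_{n−j}(x;y). Equivalently, (1/(n+1)) · ( ₍B₎E_{n+1}(x+z;y) − ₍B₎E_{n+1}(x;y) ) equals that sum. -/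
open PowerSeries Finset

noncomputable def AA (y : ℝ) (k : ℕ) : ℝ :=
  k.factorial * PowerSeries.coeff k (eulerSeries 1 * bellSeries y)

lemma expand (v y : ℝ) (n : ℕ) :
    bellEuler 1 v y n = ∑ m ∈ Finset.range (n + 1),
      (n.choose m : ℝ) * AA y (n - m) * v ^ m := by
  have h : eulerSeries 1 * expXT v * bellSeries y
      = expXT v * (eulerSeries 1 * bellSeries y) := by ring
  rw [bellEuler, h, PowerSeries.coeff_mul,
    Finset.Nat.sum_antidiagonal_eq_sum_range_succ_mk, Finset.mul_sum]
  refine Finset.sum_congr rfl fun m hm => ?_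
  have hmn : m ≤ n := Nat.lt_succ_iff.mp (Finset.mem_range.mp hm)
  have hfac : (n.choose m : ℝ) * m.factorial * (n - m).factorial = n.factorial := by
    exact_mod_cast congrArg Nat.cast (Nat.choose_mul_factorial_mul_factorial hmn)
  rw [expXT, PowerSeries.coeff_rescale, PowerSeries.coeff_exp, AA]
  have hm0 : (m.factorial : ℝ) ≠ 0 := Nat.cast_ne_zero.mpr m.factorial_ne_zero
  push_cast
  field_simp
  rw [← hfac]; ring

lemma addf (x z y : ℝ) (N : ℕ) :
    bellEuler 1 (x + z) y N = ∑ j ∈ Finset.range (N + 1),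
      (N.choose j : ℝ) * z ^ j * bellEuler 1 x y (N - j) := by
  have hexp : expXT (x + z) = expXT z * expXT x := by
    rw [expXT, expXT, expXT, PowerSeries.exp_mul_exp_eq_exp_add, add_comm]
  have h : eulerSeries 1 * expXT (x + z) * bellSeries y
      = expXT z * (eulerSeries 1 * expXT x * bellSeries y) := by rw [hexp]; ring
  rw [bellEuler, h, PowerSeries.coeff_mul,
    Finset.Nat.sum_antidiagonal_eq_sum_range_succ_mk, Finset.mul_sum]
  refine Finset.sum_congr rfl fun j hj => ?_
  have hjn : j ≤ N := Nat.lt_succ_iff.mp (Finset.mem_range.mp hj)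
  have hfac : (N.choose j : ℝ) * j.factorial * (N - j).factorial = N.factorial := by
    exact_mod_cast congrArg Nat.cast (Nat.choose_mul_factorial_mul_factorial hjn)
  rw [expXT, PowerSeries.coeff_rescale, PowerSeries.coeff_exp, bellEuler]
  have hj0 : (j.factorial : ℝ) ≠ 0 := Nat.cast_ne_zero.mpr j.factorial_ne_zero
  push_cast
  field_simp
  rw [← hfac]; ring

lemma keyB (n : ℕ) (x y z : ℝ) :
    (1 / (n + 1) : ℝ) * (bellEuler 1 (x + z) y (n + 1) - bellEuler 1 x y (n + 1)) =
        ∑ j ∈ Finset.range (n + 1),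
          z ^ (j + 1) / ((j + 1).factorial : ℝ) *
            ((n.factorial : ℝ) / ((n - j).factorial : ℝ)) * bellEuler 1 x y (n - j) := by
  rw [addf x z y (n + 1), Finset.sum_range_succ']
  simp only [Nat.choose_zero_right, Nat.cast_one, pow_zero, Nat.sub_zero, one_mul,
    Nat.succ_sub_succ_eq_sub]
  rw [add_sub_cancel_right, Finset.mul_sum]
  refine Finset.sum_congr rfl fun j hj => ?_
  have hjn : j ≤ n := Nat.lt_succ_iff.mp (Finset.mem_range.mp hj)
  have hj1 : j + 1 ≤ n + 1 := Nat.succ_le_succ hjn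
  have hfac : ((n + 1).choose (j + 1) : ℝ) * (j + 1).factorial * (n - j).factorial
      = (n + 1).factorial := by
    have := Nat.choose_mul_factorial_mul_factorial hj1
    rw [Nat.succ_sub_succ_eq_sub] at this
    exact_mod_cast congrArg Nat.cast this
  have h1 : ((n : ℝ) + 1) ≠ 0 := by positivity
  have h2 : ((j + 1).factorial : ℝ) ≠ 0 := Nat.cast_ne_zero.mpr (j+1).factorial_ne_zero
  have h3 : ((n - j).factorial : ℝ) ≠ 0 := Nat.cast_ne_zero.mpr (n-j).factorial_ne_zero
  have hfac2 : ((n+1).factorial : ℝ) = ((n:ℝ)+1) * n.factorial := by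
    push_cast [Nat.factorial_succ]; ring
  field_simp
  linear_combination z ^ (j + 1) * bellEuler 1 x y (n - j) * hfac + z ^ (j + 1) * bellEuler 1 x y (n - j) * hfac2

lemma keyA (n : ℕ) (x y z : ℝ) :
    (∫ v in x..(x + z), bellEuler 1 v y n) =
      (1 / (n + 1) : ℝ) * (bellEuler 1 (x + z) y (n + 1) - bellEuler 1 x y (n + 1)) := by
  have hI : (∫ v in x..(x + z), bellEuler 1 v y n) =
      ∑ m ∈ Finset.range (n + 1), (n.choose m : ℝ) * AA y (n - m) *
        (((x + z) ^ (m + 1) - x ^ (m + 1)) / (m + 1)) := by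
    simp only [expand]
    rw [intervalIntegral.integral_finset_sum (f := fun m v => (n.choose m : ℝ) * AA y (n - m) * v ^ m)
      (fun m _ => ((continuous_const.mul (continuous_pow m)).intervalIntegrable x (x + z)))]
    refine Finset.sum_congr rfl fun m hm => ?_
    rw [intervalIntegral.integral_const_mul, integral_pow]
  rw [hI, expand (x + z) y (n + 1), expand x y (n + 1), ← Finset.sum_sub_distrib,
    Finset.sum_range_succ' _ (n + 1)]
  simp only [Nat.succ_sub_succ_eq_sub, Nat.sub_zero, pow_zero]
  rw [show ((n+1).choose 0 : ℝ) * AA y (n+1) * 1 - ((n+1).choose 0 : ℝ) * AA y (n+1) * 1 = 0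
    by ring, add_zero, Finset.mul_sum]
  refine Finset.sum_congr rfl fun m hm => ?_
  have hch : ((n : ℝ) + 1) * (n.choose m) = ((n+1).choose (m+1) : ℝ) * ((m : ℝ) + 1) := by
    exact_mod_cast congrArg Nat.cast (Nat.add_one_mul_choose_eq n m)
  have h1 : ((n : ℝ) + 1) ≠ 0 := by positivity
  have h2 : ((m : ℝ) + 1) ≠ 0 := by positivity
  field_simp
  linear_combination AA y (n - m) * ((x + z) ^ (m + 1) - x ^ (m + 1)) * hch

theorem stmt11 (n : ℕ) (x y z : ℝ) :
    (∫ v in x..(x + z), bellEuler 1 v y n) =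
        (∑ j ∈ Finset.range (n + 1),
          z ^ (j + 1) / ((j + 1).factorial : ℝ) *
            ((n.factorial : ℝ) / ((n - j).factorial : ℝ)) * bellEuler 1 x y (n - j)) ∧
    (1 / (n + 1) : ℝ) * (bellEuler 1 (x + z) y (n + 1) - bellEuler 1 x y (n + 1)) =
        ∑ j ∈ Finset.range (n + 1),
          z ^ (j + 1) / ((j + 1).factorial : ℝ) *
            ((n.factorial : ℝ) / ((n - j).factorial : ℝ)) * bellEuler 1 x y (n - j) := by
  exact ⟨(keyA n x y z).trans (keyB n x y z), keyB n x y z⟩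
end

section
/- For every integer μ ≥ 1, every real number y, and every natural number n, ₍B₎E_n^(μ)(y) = Σ_{(i₁,…,i_μ) ∈ ℕ^μ, i₁+⋯+i_μ = n} ( n! / (i₁!⋯i_μ!) ) · ₍B₎E_{i_μ}(y) · Π_{j=1}^{μ−1} E_{i_j}, where E_m are the Euler numbers (order 1) and ₍B₎E_m(y) := ₍B₎E_m^(1)(0;y). -/
open PowerSeries Finset


lemma coeff_prod_tuple (μ : ℕ) (f : Fin μ → PowerSeries ℝ) (n : ℕ) :
    PowerSeries.coeff n (∏ j, f j) =
      ∑ i ∈ Finset.Nat.antidiagonalTuple μ n, ∏ j, PowerSeries.coeff (i j) (f j) := by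
  rw [PowerSeries.coeff_prod]
  refine Finset.sum_nbij' (fun l => ⇑l) (fun g => Finsupp.equivFunOnFinite.symm g) ?_ ?_ ?_ ?_ ?_
  · intro l hl
    simp only [Finset.mem_finsuppAntidiag] at hl
    simp [Finset.Nat.mem_antidiagonalTuple, hl.1]
  · intro g hg
    simp only [Finset.Nat.mem_antidiagonalTuple] at hg
    simp [Finset.mem_finsuppAntidiag, hg]
  · intro l _; ext x; simp
  · intro g _; ext x; simp
  · intro l _; rfl

lemma compl_prod {M : Type*} [CommMonoid M] (μ : ℕ) (hμ : 1 ≤ μ) (g : Fin μ → M) :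
    ∏ j ∈ ({(⟨μ - 1, Nat.sub_lt hμ Nat.one_pos⟩ : Fin μ)}ᶜ : Finset (Fin μ)), g j =
      ∏ j : Fin (μ - 1), g (Fin.castLE (Nat.sub_le μ 1) j) := by
  have h : (Finset.univ.map (Fin.castLEEmb (Nat.sub_le μ 1)))
      = ({(⟨μ - 1, Nat.sub_lt hμ Nat.one_pos⟩ : Fin μ)}ᶜ : Finset (Fin μ)) := by
    ext x
    simp only [Finset.mem_map, Finset.mem_univ, true_and, Finset.mem_compl,
      Finset.mem_singleton, Fin.ext_iff, Fin.coe_castLEEmb]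
    constructor
    · rintro ⟨a, ha⟩
      rw [Fin.coe_castLE] at ha
      have := a.isLt
      omega
    · intro hx
      exact ⟨⟨x.val, by omega⟩, by simp [Fin.castLE, Fin.ext_iff]⟩
  rw [← h, Finset.prod_map]
  rfl

/-- The Euler number `E_n` with `∑ E_n t^n/n! = 2/(e^t+1)`. -/
noncomputable def eulerNum (n : ℕ) : ℝ :=
  n.factorial * PowerSeries.coeff n (2 * (PowerSeries.exp ℝ + 1)⁻¹)

/-- `₍B₎E_n^(μ)(y) = ₍B₎E_n^(μ)(0;y)`, with
`∑ ₍B₎E_n^(μ)(y) t^n/n! = (2/(e^t+1))^μ e^{y(e^t-1)}`. -/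
noncomputable def bellEulerAt0 (μ : ℕ) (y : ℝ) (n : ℕ) : ℝ :=
  n.factorial * PowerSeries.coeff n (eulerSeries μ * bellSeries y)

theorem stmt13 (μ : ℕ) (hμ : 1 ≤ μ) (y : ℝ) (n : ℕ) :
    bellEulerAt0 μ y n =
      ∑ i ∈ Finset.Nat.antidiagonalTuple μ n,
        ((n.factorial : ℝ) / ∏ j, ((i j).factorial : ℝ)) *
          bellEulerAt0 1 y (i ⟨μ - 1, by omega⟩) *
          ∏ j : Fin (μ - 1), eulerNum (i (Fin.castLE (Nat.sub_le μ 1) j)) := by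
  classical
  set a : Fin μ := ⟨μ - 1, by omega⟩ with ha
  set F : Fin μ → PowerSeries ℝ :=
    fun j => if j = a then eulerSeries 1 * bellSeries y else eulerSeries 1 with hF
  have hFa : F a = eulerSeries 1 * bellSeries y := if_pos rfl
  have hcast : ∀ j : Fin (μ - 1), Fin.castLE (Nat.sub_le μ 1) j ≠ a := by
    intro j h
    have := j.isLt
    have : (Fin.castLE (Nat.sub_le μ 1) j : ℕ) = μ - 1 := by rw [h]
    rw [Fin.coe_castLE] at this
    omega
  have hsplit : eulerSeries μ * bellSeries y = ∏ j : Fin μ, F j := by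
    rw [Fintype.prod_eq_mul_prod_compl a F]
    have h2 : ∏ j ∈ ({a}ᶜ : Finset (Fin μ)), F j = eulerSeries 1 ^ (μ - 1) := by
      rw [Finset.prod_congr rfl fun j hj =>
        if_neg (by simpa using hj : j ≠ a), Finset.prod_const]
      congr 1
      simp [Finset.card_compl]
    rw [hFa, h2]
    simp only [eulerSeries, pow_one]
    conv_lhs => rw [show μ = (μ - 1) + 1 by omega, pow_succ]
    ring
  unfold bellEulerAt0
  rw [hsplit, coeff_prod_tuple, Finset.mul_sum]
  refine Finset.sum_congr rfl fun i hi => ?_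
  have hsplitC : ∏ j : Fin μ, PowerSeries.coeff (i j) (F j)
      = PowerSeries.coeff (i a) (eulerSeries 1 * bellSeries y) *
        ∏ j : Fin (μ - 1), PowerSeries.coeff (i (Fin.castLE (Nat.sub_le μ 1) j))
          (eulerSeries 1) := by
    rw [Fintype.prod_eq_mul_prod_compl a (fun j => PowerSeries.coeff (i j) (F j)), hFa,
      compl_prod μ hμ (fun j => PowerSeries.coeff (i j) (F j))]
    congr 1
    exact Finset.prod_congr rfl fun j _ => by rw [show F _ = eulerSeries 1 from if_neg (hcast j)]
  have hsplitF : ∏ j : Fin μ, ((i j).factorial : ℝ)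
      = ((i a).factorial : ℝ) *
        ∏ j : Fin (μ - 1), ((i (Fin.castLE (Nat.sub_le μ 1) j)).factorial : ℝ) := by
    rw [Fintype.prod_eq_mul_prod_compl a (fun j => ((i j).factorial : ℝ)),
      compl_prod μ hμ (fun j => ((i j).factorial : ℝ))]
  rw [hsplitC, hsplitF]
  simp only [bellEulerAt0, eulerNum, eulerSeries, pow_one]
  rw [Finset.prod_mul_distrib]
  have hA : ((i a).factorial : ℝ) ≠ 0 := Nat.cast_ne_zero.mpr (Nat.factorial_ne_zero _)
  have hP : (∏ j : Fin (μ - 1), ((i (Fin.castLE (Nat.sub_le μ 1) j)).factorial : ℝ)) ≠ 0 :=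
    Finset.prod_ne_zero_iff.mpr fun j _ => Nat.cast_ne_zero.mpr (Nat.factorial_ne_zero _)
  field_simp
end

section
/- Fix an integer μ ≥ 1, a real number y, and a natural number n. For every real polynomial q(x) of degree at most n, q(x) = Σ_{k=0}^{n} b_k^{(μ)} · ₍B₎E_k^(μ)(x;y) for all x, where b_k^{(μ)} = (1/(2^μ k!)) · ⟨ (e^t+1)^μ · e^{−y(e^t−1)} · t^k | q(x) ⟩ and ⟨·|·⟩ is the umbral pairing. -/
open PowerSeries Finset

/-- The umbral pairing `⟨g(t) | q(x)⟩ = ∑_m q_m · m! · (coeff of t^m in g)`. -/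
noncomputable def umbral (g : PowerSeries ℝ) (q : Polynomial ℝ) : ℝ :=
  ∑ m ∈ Finset.range (q.natDegree + 1),
    q.coeff m * m.factorial * PowerSeries.coeff m g

/-! ### Auxiliary lemmas -/

lemma coeff_E_pow_eq_zero {i k : ℕ} (h : i < k) :
    PowerSeries.coeff i ((PowerSeries.exp ℝ - 1) ^ k) = 0 := by
  have hX : (PowerSeries.X : PowerSeries ℝ) ∣ (PowerSeries.exp ℝ - 1) :=
    PowerSeries.X_dvd_iff.2 (by simp [PowerSeries.constantCoeff_exp])
  exact PowerSeries.X_pow_dvd_iff.1 (pow_dvd_pow_of_dvd hX k) i h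

/-- Partial sums approximating `bellSeries`. -/
noncomputable def Sser (N : ℕ) (y : ℝ) : PowerSeries ℝ :=
  ∑ k ∈ Finset.range (N + 1),
    PowerSeries.C (y ^ k * ((k.factorial : ℝ))⁻¹) * (PowerSeries.exp ℝ - 1) ^ k

lemma coeff_Sser (N : ℕ) (y : ℝ) (i : ℕ) :
    PowerSeries.coeff i (Sser N y) =
      ∑ k ∈ Finset.range (N + 1), y ^ k * ((k.factorial : ℝ))⁻¹ *
        PowerSeries.coeff i ((PowerSeries.exp ℝ - 1) ^ k) := by
  rw [Sser, map_sum]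
  exact Finset.sum_congr rfl fun k _ => PowerSeries.coeff_C_mul _ _ _

lemma coeff_bellSeries_eq_Sser (y : ℝ) {i N : ℕ} (h : i ≤ N) :
    PowerSeries.coeff i (bellSeries y) = PowerSeries.coeff i (Sser N y) := by
  rw [bellSeries, PowerSeries.coeff_mk, coeff_Sser]
  apply Finset.sum_subset (Finset.range_subset_range.2 (by omega))
  intro k hk hk'
  have hik : i < k := by
    simp only [Finset.mem_range] at hk hk'
    omega
  rw [coeff_E_pow_eq_zero hik, mul_zero]

lemma sum_square_eq_triangle (n : ℕ) (f : ℕ → ℕ → ℝ)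
    (hf : ∀ k l, n < k + l → f k l = 0) :
    ∑ k ∈ Finset.range (n + 1), ∑ l ∈ Finset.range (n + 1), f k l
      = ∑ m ∈ Finset.range (n + 1), ∑ k ∈ Finset.range (m + 1), f k (m - k) := by
  have h1 : ∀ m ∈ Finset.range (n + 1), ∑ k ∈ Finset.range (m + 1), f k (m - k)
      = ∑ p ∈ Finset.HasAntidiagonal.antidiagonal m, f p.1 p.2 := by
    intro m _
    rw [Finset.Nat.sum_antidiagonal_eq_sum_range_succ_mk]
  rw [Finset.sum_congr rfl h1]
  have hdisj : (↑(Finset.range (n + 1)) : Set ℕ).PairwiseDisjoint Finset.HasAntidiagonal.antidiagonal := by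
    intro a _ b _ hab
    simp only [Finset.disjoint_left]
    intro p hp hp'
    rw [Finset.HasAntidiagonal.mem_antidiagonal] at hp hp'
    exact hab (hp ▸ hp')
  rw [← Finset.sum_biUnion hdisj, ← Finset.sum_product']
  symm
  apply Finset.sum_subset
  · intro p hp
    simp only [Finset.mem_biUnion, Finset.HasAntidiagonal.mem_antidiagonal, Finset.mem_range] at hp
    obtain ⟨m, hm, hpm⟩ := hp
    simp only [Finset.mem_product, Finset.mem_range]
    omega
  · intro p hp hp'
    apply hf
    by_contra hle
    push_neg at hle
    apply hp'
    simp only [Finset.mem_biUnion, Finset.HasAntidiagonal.mem_antidiagonal, Finset.mem_range]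
    exact ⟨p.1 + p.2, by omega, rfl⟩

lemma binom_sum (y y' : ℝ) (m : ℕ) :
    ∑ k ∈ Finset.range (m + 1),
        y ^ k * ((k.factorial : ℝ))⁻¹ * (y' ^ (m - k) * (((m - k).factorial : ℝ))⁻¹)
      = (y + y') ^ m * ((m.factorial : ℝ))⁻¹ := by
  rw [add_pow, Finset.sum_mul]
  apply Finset.sum_congr rfl
  intro k hk
  have hk' : k ≤ m := Nat.lt_succ_iff.1 (Finset.mem_range.1 hk)
  have hkf : (k.factorial : ℝ) ≠ 0 := Nat.cast_ne_zero.2 k.factorial_ne_zero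
  have hmkf : (((m - k).factorial : ℝ)) ≠ 0 := Nat.cast_ne_zero.2 (m - k).factorial_ne_zero
  have hmf : ((m.factorial : ℝ)) ≠ 0 := Nat.cast_ne_zero.2 m.factorial_ne_zero
  rw [Nat.cast_choose ℝ hk']
  field_simp

lemma bellSeries_mul (y y' : ℝ) :
    bellSeries y * bellSeries y' = bellSeries (y + y') := by
  ext n
  rw [PowerSeries.coeff_mul]
  have hstep : ∀ p ∈ Finset.HasAntidiagonal.antidiagonal n,
      PowerSeries.coeff p.1 (bellSeries y) * PowerSeries.coeff p.2 (bellSeries y')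
        = PowerSeries.coeff p.1 (Sser n y) * PowerSeries.coeff p.2 (Sser n y') := by
    intro p hp
    have h := Finset.HasAntidiagonal.mem_antidiagonal.1 hp
    rw [coeff_bellSeries_eq_Sser y (show p.1 ≤ n by omega),
      coeff_bellSeries_eq_Sser y' (show p.2 ≤ n by omega)]
  rw [Finset.sum_congr rfl hstep, ← PowerSeries.coeff_mul]
  have expand : Sser n y * Sser n y' =
      ∑ k ∈ Finset.range (n + 1), ∑ l ∈ Finset.range (n + 1),
        PowerSeries.C (y ^ k * ((k.factorial : ℝ))⁻¹ * (y' ^ l * ((l.factorial : ℝ))⁻¹)) *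
          (PowerSeries.exp ℝ - 1) ^ (k + l) := by
    rw [Sser, Sser, Finset.sum_mul_sum]
    refine Finset.sum_congr rfl fun k _ => Finset.sum_congr rfl fun l _ => ?_
    simp only [map_mul, pow_add]
    ring
  rw [expand]
  rw [map_sum]
  have hco : ∀ k ∈ Finset.range (n + 1),
      PowerSeries.coeff n (∑ l ∈ Finset.range (n + 1),
        PowerSeries.C (y ^ k * ((k.factorial : ℝ))⁻¹ * (y' ^ l * ((l.factorial : ℝ))⁻¹)) *
          (PowerSeries.exp ℝ - 1) ^ (k + l))
      = ∑ l ∈ Finset.range (n + 1),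
          y ^ k * ((k.factorial : ℝ))⁻¹ * (y' ^ l * ((l.factorial : ℝ))⁻¹) *
            PowerSeries.coeff n ((PowerSeries.exp ℝ - 1) ^ (k + l)) := by
    intro k _
    rw [map_sum]
    exact Finset.sum_congr rfl fun l _ => PowerSeries.coeff_C_mul _ _ _
  rw [Finset.sum_congr rfl hco]
  rw [sum_square_eq_triangle n _ (fun k l h => by rw [coeff_E_pow_eq_zero h, mul_zero])]
  rw [bellSeries, PowerSeries.coeff_mk]
  apply Finset.sum_congr rfl
  intro m hm
  have hdiag : ∀ k ∈ Finset.range (m + 1),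
      y ^ k * ((k.factorial : ℝ))⁻¹ * (y' ^ (m - k) * (((m - k).factorial : ℝ))⁻¹) *
          PowerSeries.coeff n ((PowerSeries.exp ℝ - 1) ^ (k + (m - k)))
        = y ^ k * ((k.factorial : ℝ))⁻¹ * (y' ^ (m - k) * (((m - k).factorial : ℝ))⁻¹) *
          PowerSeries.coeff n ((PowerSeries.exp ℝ - 1) ^ m) := by
    intro k hk
    have hkm : k + (m - k) = m := by
      have := Finset.mem_range.1 hk; omega
    rw [hkm]
  rw [Finset.sum_congr rfl hdiag, ← Finset.sum_mul, binom_sum]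

lemma bellSeries_zero : bellSeries 0 = 1 := by
  ext n
  rw [bellSeries, PowerSeries.coeff_mk]
  cases n with
  | zero => simp
  | succ n =>
    rw [PowerSeries.coeff_one, if_neg (by omega)]
    apply Finset.sum_eq_zero
    intro k hk
    rcases Nat.eq_zero_or_pos k with rfl | hkpos
    · simp [PowerSeries.coeff_one]
    · simp [zero_pow hkpos.ne']

lemma coeff_expXT (x : ℝ) (m : ℕ) :
    PowerSeries.coeff m (expXT x) = x ^ m * ((m.factorial : ℝ))⁻¹ := by
  rw [expXT, PowerSeries.coeff_rescale, PowerSeries.coeff_exp]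
  simp [one_div]

lemma GE_eq (μ : ℕ) (x y : ℝ) :
    (eulerSeries μ * expXT x * bellSeries y) *
        ((PowerSeries.exp ℝ + 1) ^ μ * bellSeries (-y))
      = PowerSeries.C ((2 : ℝ) ^ μ) * expXT x := by
  have h2 : PowerSeries.constantCoeff (PowerSeries.exp ℝ + 1) ≠ 0 := by
    simp [PowerSeries.constantCoeff_exp]
  have hinv : (PowerSeries.exp ℝ + 1) * (PowerSeries.exp ℝ + 1)⁻¹ = 1 :=
    PowerSeries.mul_inv_cancel _ h2
  have hb : bellSeries y * bellSeries (-y) = 1 := by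
    rw [bellSeries_mul, add_neg_cancel, bellSeries_zero]
  have hC : PowerSeries.C ((2 : ℝ) ^ μ) = ((2 : PowerSeries ℝ)) ^ μ := by
    rw [map_pow, map_ofNat]
  rw [hC, eulerSeries]
  calc (2 * (PowerSeries.exp ℝ + 1)⁻¹) ^ μ * expXT x * bellSeries y *
        ((PowerSeries.exp ℝ + 1) ^ μ * bellSeries (-y))
      = ((PowerSeries.exp ℝ + 1) * (PowerSeries.exp ℝ + 1)⁻¹) ^ μ * 2 ^ μ *
          (bellSeries y * bellSeries (-y)) * expXT x := by
        rw [mul_pow, mul_pow]; ring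
    _ = 2 ^ μ * expXT x := by rw [hinv, hb, one_pow, one_mul, mul_one]

lemma key_s14 (μ : ℕ) (x y : ℝ) {m n : ℕ} (hmn : m ≤ n) :
    ∑ k ∈ Finset.range (n + 1),
        ((2 ^ μ * k.factorial : ℝ))⁻¹ *
          ((m.factorial : ℝ) * PowerSeries.coeff m
            ((PowerSeries.exp ℝ + 1) ^ μ * bellSeries (-y) * PowerSeries.X ^ k)) *
          bellEuler μ x y k
      = x ^ m := by
  rw [← Finset.sum_subset (Finset.range_subset_range.2 (show m + 1 ≤ n + 1 by omega))
    (fun k hk hk' => by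
      have hmk : ¬ k ≤ m := by
        simp only [Finset.mem_range] at hk hk'; omega
      rw [PowerSeries.coeff_mul_X_pow', if_neg hmk]
      simp)]
  have hterm : ∀ k ∈ Finset.range (m + 1),
      ((2 ^ μ * k.factorial : ℝ))⁻¹ *
          ((m.factorial : ℝ) * PowerSeries.coeff m
            ((PowerSeries.exp ℝ + 1) ^ μ * bellSeries (-y) * PowerSeries.X ^ k)) *
          bellEuler μ x y k
      = ((2 : ℝ) ^ μ)⁻¹ * (m.factorial : ℝ) *
          (PowerSeries.coeff k (eulerSeries μ * expXT x * bellSeries y) *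
            PowerSeries.coeff (m - k)
              ((PowerSeries.exp ℝ + 1) ^ μ * bellSeries (-y))) := by
    intro k hk
    have hkm : k ≤ m := Nat.lt_succ_iff.1 (Finset.mem_range.1 hk)
    rw [PowerSeries.coeff_mul_X_pow', if_pos hkm, bellEuler]
    have hkf : (k.factorial : ℝ) ≠ 0 := Nat.cast_ne_zero.2 k.factorial_ne_zero
    have h2 : ((2 : ℝ) ^ μ) ≠ 0 := by positivity
    field_simp
  rw [Finset.sum_congr rfl hterm, ← Finset.mul_sum]
  have hmul : ∑ k ∈ Finset.range (m + 1),
      PowerSeries.coeff k (eulerSeries μ * expXT x * bellSeries y) *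
        PowerSeries.coeff (m - k) ((PowerSeries.exp ℝ + 1) ^ μ * bellSeries (-y))
      = PowerSeries.coeff m ((eulerSeries μ * expXT x * bellSeries y) *
          ((PowerSeries.exp ℝ + 1) ^ μ * bellSeries (-y))) := by
    rw [PowerSeries.coeff_mul, Finset.Nat.sum_antidiagonal_eq_sum_range_succ_mk]
  rw [hmul, GE_eq, PowerSeries.coeff_C_mul, coeff_expXT]
  have hmf : ((m.factorial : ℝ)) ≠ 0 := Nat.cast_ne_zero.2 m.factorial_ne_zero
  have h2 : ((2 : ℝ) ^ μ) ≠ 0 := by positivity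
  field_simp

theorem stmt14 (μ : ℕ) (hμ : 1 ≤ μ) (y : ℝ) (n : ℕ) (q : Polynomial ℝ)
    (hq : q.natDegree ≤ n) (x : ℝ) :
    q.eval x =
      ∑ k ∈ Finset.range (n + 1),
        ((2 ^ μ * k.factorial : ℝ))⁻¹ *
          umbral ((PowerSeries.exp ℝ + 1) ^ μ * bellSeries (-y) * PowerSeries.X ^ k) q *
          bellEuler μ x y k := by
  have hrhs : ∀ k ∈ Finset.range (n + 1),
      ((2 ^ μ * k.factorial : ℝ))⁻¹ *
          umbral ((PowerSeries.exp ℝ + 1) ^ μ * bellSeries (-y) * PowerSeries.X ^ k) q *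
          bellEuler μ x y k
      = ∑ m ∈ Finset.range (q.natDegree + 1),
          q.coeff m *
            (((2 ^ μ * k.factorial : ℝ))⁻¹ *
              ((m.factorial : ℝ) * PowerSeries.coeff m
                ((PowerSeries.exp ℝ + 1) ^ μ * bellSeries (-y) * PowerSeries.X ^ k)) *
              bellEuler μ x y k) := by
    intro k _
    rw [umbral, Finset.mul_sum, Finset.sum_mul]
    exact Finset.sum_congr rfl fun m _ => by ring
  rw [Finset.sum_congr rfl hrhs, Finset.sum_comm, Polynomial.eval_eq_sum_range]
  apply Finset.sum_congr rfl
  intro m hm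
  have hmn : m ≤ n := le_trans (Nat.lt_succ_iff.1 (Finset.mem_range.1 hm)) hq
  rw [← Finset.mul_sum, key_s14 μ x y hmn]
end
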